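/- For every rational number d, d times the coefficient of z² in the power series H(z)^6·H(d²z)^{-1} equals d(2d⁴−10d²+23)/15, where H(z) = C(z)/S(z) with C(z) = Σ z^k/(2k)! and S(z) = Σ z^k/(2k+1)!. -/

import Mathlib

open PowerSeries

noncomputable def Cser : PowerSeries ℚ := PowerSeries.mk fun k => 1 / (2 * k).factorial

noncomputable def Sser : PowerSeries ℚ := PowerSeries.mk fun k => 1 / (2 * k + 1).factorial

noncomputable def Hser : PowerSeries ℚ := Cser * Sser⁻¹

lemma coeff0_mul (f g : PowerSeries ℚ) :
    coeff 0 (f * g) = coeff 0 f * coeff 0 g := by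
  simp [coeff_mul]

lemma coeff1_mul (f g : PowerSeries ℚ) :
    coeff 1 (f * g) = coeff 0 f * coeff 1 g + coeff 1 f * coeff 0 g := by
  rw [coeff_mul, Finset.Nat.sum_antidiagonal_eq_sum_range_succ_mk]
  simp [Finset.sum_range_succ]

lemma coeff2_mul (f g : PowerSeries ℚ) :
    coeff 2 (f * g) = coeff 0 f * coeff 2 g + coeff 1 f * coeff 1 g
      + coeff 2 f * coeff 0 g := by
  rw [coeff_mul, Finset.Nat.sum_antidiagonal_eq_sum_range_succ_mk]
  simp [Finset.sum_range_succ]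

lemma S0 : coeff 0 Sser = 1 := by simp [Sser]
lemma S1 : coeff 1 Sser = 1/6 := by norm_num [Sser, Nat.factorial]
lemma S2 : coeff 2 Sser = 1/120 := by norm_num [Sser, Nat.factorial]
lemma C0 : coeff 0 Cser = 1 := by simp [Cser]
lemma C1 : coeff 1 Cser = 1/2 := by norm_num [Cser, Nat.factorial]
lemma C2 : coeff 2 Cser = 1/24 := by norm_num [Cser, Nat.factorial]

lemma Sconst : constantCoeff Sser ≠ 0 := by
  rw [← coeff_zero_eq_constantCoeff, S0]; norm_num

lemma HS : Hser * Sser = Cser := by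
  rw [Hser, mul_assoc, PowerSeries.inv_mul_cancel _ Sconst, mul_one]

lemma H0 : coeff 0 Hser = 1 := by
  have := congrArg (coeff 0) HS
  rw [coeff0_mul, S0, C0] at this; linarith

lemma H1 : coeff 1 Hser = 1/3 := by
  have := congrArg (coeff 1) HS
  rw [coeff1_mul, S0, S1, C1, H0] at this; linarith

lemma H2 : coeff 2 Hser = -1/45 := by
  have := congrArg (coeff 2) HS
  rw [coeff2_mul, S0, S1, S2, C2, H0, H1] at this; linarith

lemma Hconst : constantCoeff Hser ≠ 0 := by
  rw [← coeff_zero_eq_constantCoeff, H0]; norm_num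

lemma KH : Hser⁻¹ * Hser = 1 := PowerSeries.inv_mul_cancel _ Hconst

lemma K0 : coeff 0 Hser⁻¹ = 1 := by
  have := congrArg (coeff 0) KH
  rw [coeff0_mul, H0] at this; simpa using this

lemma K1 : coeff 1 Hser⁻¹ = -1/3 := by
  have := congrArg (coeff 1) KH
  rw [coeff1_mul, H0, H1, K0] at this; simp at this; linarith

lemma K2 : coeff 2 Hser⁻¹ = 2/15 := by
  have := congrArg (coeff 2) KH
  rw [coeff2_mul, H0, H1, H2, K0, K1] at this; simp at this; linarith

lemma rescale_inv (c : ℚ) : (PowerSeries.rescale c Hser)⁻¹ = PowerSeries.rescale c Hser⁻¹ := by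
  rw [eq_comm, PowerSeries.eq_inv_iff_mul_eq_one, ← map_mul, KH, map_one]
  rw [← coeff_zero_eq_constantCoeff, coeff_rescale, pow_zero, one_mul,
    coeff_zero_eq_constantCoeff]
  exact Hconst

lemma H6_0 : coeff 0 (Hser ^ 6) = 1 := by
  have h : Hser ^ 6 = Hser * (Hser * (Hser * (Hser * (Hser * Hser)))) := by ring
  rw [h]; simp [coeff0_mul, H0]

lemma H6_1 : coeff 1 (Hser ^ 6) = 2 := by
  have h : Hser ^ 6 = Hser * (Hser * (Hser * (Hser * (Hser * Hser)))) := by ring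
  rw [h]; simp [coeff1_mul, coeff0_mul, H0, H1]; norm_num

lemma H6_2 : coeff 2 (Hser ^ 6) = 23/15 := by
  have h : Hser ^ 6 = Hser * (Hser * (Hser * (Hser * (Hser * Hser)))) := by ring
  rw [h]; simp [coeff2_mul, coeff1_mul, coeff0_mul, H0, H1, H2]; norm_num

theorem signature_fourfold_in_P5 (d : ℚ) :
    d * coeff 2 (Hser ^ 6 * (PowerSeries.rescale (d ^ 2) Hser)⁻¹)
      = d * (2 * d ^ 4 - 10 * d ^ 2 + 23) / 15 := by
  rw [rescale_inv, coeff2_mul, H6_0, H6_1, H6_2,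
    coeff_rescale, coeff_rescale, coeff_rescale, K0, K1, K2]
  ring
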